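/- For the DoD-stabilized scheme with η ∈ [1 − α/λ, 1] and 0 < α < λ ≤ 1/2, the scheme conserves mass: Σ_j |I_j| u^{n+1}_j = Σ_j |I_j| u^n_j, where |I_j| is the length of cell j (h for standard cells, αh and (1−α)h for the cut cells), under periodic boundary conditions. -/

import Mathlib

/-- The DoD-stabilized scheme on the periodic cut cell mesh conserves mass:
`Σ_j |I_j| u^{n+1}_j = Σ_j |I_j| u^n_j` with cell lengths `αh` on `k1`,
`(1−α)h` on `k2 = k1+1`, and `h` otherwise. -/
theorem dod_mass_conservation (N : ℕ) [NeZero N] (hN : 3 ≤ N)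
    (h α lam η : ℝ) (hh : 0 < h)
    (hα0 : 0 < α) (hcut : α < lam) (hlam : lam ≤ 1/2)
    (hη1 : 1 - α / lam ≤ η) (hη2 : η ≤ 1)
    (k1 : ZMod N) (u : ℕ → ZMod N → ℝ)
    (hstd : ∀ n, ∀ j : ZMod N, j ≠ k1 → j ≠ k1 + 1 →
      u (n+1) j = u n j - lam * (u n j - u n (j - 1)))
    (hk1 : ∀ n, u (n+1) k1 =
      u n k1 - (lam / α) * (1 - η) * (u n k1 - u n (k1 - 1)))
    (hk2 : ∀ n, u (n+1) (k1 + 1) =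
      u n (k1 + 1) - (lam / (1 - α)) * (u n (k1 + 1) - u n k1)
        - (lam / (1 - α)) * η * (u n k1 - u n (k1 - 1))) :
    ∀ n, (∑ j : ZMod N,
        (if j = k1 then α * h else if j = k1 + 1 then (1 - α) * h else h) * u (n+1) j)
      = ∑ j : ZMod N,
        (if j = k1 then α * h else if j = k1 + 1 then (1 - α) * h else h) * u n j := by
  intro n
  classical
  have hα : α ≠ 0 := ne_of_gt hα0
  have h1α : (1:ℝ) - α ≠ 0 := by nlinarith
  haveI : Fact (1 < N) := ⟨by omega⟩
  have hk12 : k1 ≠ k1 + 1 := by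
    intro hco
    have h10 : (1 : ZMod N) = 0 := left_eq_add.mp hco
    exact one_ne_zero h10
  have key : ∀ j : ZMod N,
      (if j = k1 then α * h else if j = k1 + 1 then (1 - α) * h else h) * u (n+1) j
      = (if j = k1 then α * h else if j = k1 + 1 then (1 - α) * h else h) * u n j
        + (-(lam*h) * (u n j - u n (j-1))
          + ((if j = k1 then lam*h*η*(u n k1 - u n (k1-1)) else 0)
            + (if j = k1 + 1 then -(lam*h*η*(u n k1 - u n (k1-1))) else 0))) := by
    intro j
    by_cases hj1 : j = k1
    · subst hj1
      rw [hk1 n]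
      simp only [if_pos rfl, if_neg hk12, ↓reduceIte]
      field_simp
      ring
    · by_cases hj2 : j = k1 + 1
      · subst hj2
        rw [hk2 n]
        simp only [if_neg (Ne.symm hk12), if_pos rfl, ↓reduceIte]
        field_simp
        ring
      · rw [hstd n j hj1 hj2]
        simp only [if_neg hj1, if_neg hj2]
        ring
  rw [Finset.sum_congr rfl (fun j _ => key j)]
  have tele : ∑ j : ZMod N, (u n j - u n (j-1)) = 0 := by
    rw [Finset.sum_sub_distrib]
    have he : ∑ j : ZMod N, u n (j - 1) = ∑ j : ZMod N, u n j :=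
      Fintype.sum_equiv (Equiv.subRight (1 : ZMod N)) _ _ (fun j => rfl)
    rw [he]; ring
  rw [Finset.sum_add_distrib, Finset.sum_add_distrib, Finset.sum_add_distrib,
    ← Finset.mul_sum, tele]
  simp [Finset.sum_ite_eq']
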